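/- Let (W,S) be a Coxeter system with s_0 ∈ S, and let J ⊆ S with s_0 ∈ J. Every element of τ(W^J) achieves the minimum ℓ_{R∪R^{-1}}-length within its coset of W^+/W^+_{τ(J)}, where W^J denotes the set of minimum-length coset representatives for W/W_J. -/

import Mathlib

open CoxeterSystem

namespace AltCox

variable {W : Type*} [Group W]

/-- Word length of `w` with respect to a generating set `A`:
the minimum length of a word in `A` whose product is `w`. -/
noncomputable def glen (A : Set W) (w : W) : ℕ :=
  sInf {k | ∃ l : List W, (∀ x ∈ l, x ∈ A) ∧ l.prod = w ∧ l.length = k}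

variable {n : ℕ} {M : CoxeterMatrix (Fin (n + 1))} (cs : CoxeterSystem M W)

/-- The alternating subgroup `W⁺`: the kernel of the sign character, i.e. the
set of elements of even Coxeter length. -/
def alt : Subgroup W where
  carrier := {w | Even (cs.length w)}
  one_mem' := by simp [Nat.even_iff]
  mul_mem' := by
    intro a b ha hb
    simp only [Set.mem_setOf_eq, Nat.even_iff] at *
    have := cs.length_mul_mod_two a b
    omega
  inv_mem' := by
    intro a ha
    simpa [cs.length_inv] using ha

/-- The generating set `R = {r_i = s₀ sᵢ : i ≠ 0}` of `W⁺`. -/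
def Rset : Set W := {x | ∃ i : Fin (n + 1), i ≠ 0 ∧ x = cs.simple 0 * cs.simple i}

/-- The symmetrized generating set `R ∪ R⁻¹`. -/
def Rsym : Set W := Rset cs ∪ (Rset cs)⁻¹

/-- `ν w`: the minimum number of letters different from `s₀` among all words
in the simple reflections whose product is `w`. -/
noncomputable def nu (w : W) : ℕ :=
  sInf {k | ∃ ω : List (Fin (n + 1)), cs.wordProd ω = w ∧
    (ω.filter (fun i => i ≠ 0)).length = k}

/-- `τ w` is the unique element of `{w, w s₀}` lying in `W⁺`. -/
noncomputable def tau (w : W) : W :=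
  if Even (cs.length w) then w else w * cs.simple 0

/-- `s₀` is evenly laced: `m₀ᵢ` is even or infinite (encoded by `0`) for all `i ≠ 0`. -/
def EvenlyLaced (M : CoxeterMatrix (Fin (n + 1))) : Prop :=
  ∀ i : Fin (n + 1), i ≠ 0 → Even (M 0 i)

/-- The set of all reflections of `(W, S)`. -/
def Tall : Set W := {t | cs.IsReflection t}

/-- The set `T̂` of reflections conjugate to some simple reflection other than `s₀`. -/
def That : Set W := {t | ∃ w : W, ∃ i : Fin (n + 1), i ≠ 0 ∧ t = w * cs.simple i * w⁻¹}

/-- The set of odd palindromes of `W⁺` with respect to `R`. -/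
def Palin : Set W :=
  {p | ∃ l : List W, (∀ x ∈ l, x ∈ Rsym cs) ∧ Odd l.length ∧ l.reverse = l ∧ l.prod = p}

/-- The set of left-shortening palindromes of `w`. -/
noncomputable def PL (w : W) : Set W :=
  {p ∈ Palin cs | glen (Rsym cs) (p * w) < glen (Rsym cs) w}

/-- The set of right-shortening palindromes of `w`. -/
noncomputable def PR (w : W) : Set W :=
  {p ∈ Palin cs | glen (Rsym cs) (w * p) < glen (Rsym cs) w}

/-- The right weak order on `(W⁺, R)`. -/
noncomputable def rweak (u w : W) : Prop :=
  Relation.ReflTransGen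
    (fun a b => ∃ r ∈ Rsym cs, b = a * r ∧
      glen (Rsym cs) b = glen (Rsym cs) a + 1) u w

/-- The left weak order on `(W⁺, R)`. -/
noncomputable def lweak (u w : W) : Prop :=
  Relation.ReflTransGen
    (fun a b => ∃ r ∈ Rsym cs, b = r * a ∧
      glen (Rsym cs) b = glen (Rsym cs) a + 1) u w

/-- The right strong order on `(W⁺, R)`. -/
noncomputable def rstrong (u w : W) : Prop :=
  Relation.ReflTransGen
    (fun a b => ∃ p ∈ Palin cs, b = a * p ∧
      glen (Rsym cs) a < glen (Rsym cs) b) u w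

/-- The left strong order on `(W⁺, R)`. -/
noncomputable def lstrong (u w : W) : Prop :=
  Relation.ReflTransGen
    (fun a b => ∃ p ∈ Palin cs, b = p * a ∧
      glen (Rsym cs) a < glen (Rsym cs) b) u w

/-- The strong Bruhat order on a Coxeter system. -/
noncomputable def bruhatLE {B : Type*} {M' : CoxeterMatrix B} {W' : Type*} [Group W']
    (cs' : CoxeterSystem M' W') (u w : W') : Prop :=
  Relation.ReflTransGen
    (fun a b => ∃ t, cs'.IsReflection t ∧ b = a * t ∧ cs'.length a < cs'.length b) u w

/-- The right weak order of a Coxeter system. -/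
noncomputable def coxRweak {B : Type*} {M' : CoxeterMatrix B} {W' : Type*} [Group W']
    (cs' : CoxeterSystem M' W') (u w : W') : Prop :=
  Relation.ReflTransGen
    (fun a b => ∃ i, b = a * cs'.simple i ∧ cs'.length b = cs'.length a + 1) u w

/-- The standard parabolic subgroup `W_J` for `J ⊆ S`. -/
def parabolic (J : Set (Fin (n + 1))) : Subgroup W :=
  Subgroup.closure (cs.simple '' J)

/-- The image `τ(J) = {s₀ sᵢ : sᵢ ∈ J, i ≠ 0}` of a subset `J ⊆ S` containing `s₀`. -/
def tauSet (J : Set (Fin (n + 1))) : Set W :=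
  {x | ∃ i ∈ J, i ≠ 0 ∧ x = cs.simple 0 * cs.simple i}

/-- The set `W^J` of minimum-length coset representatives for `W/W_J`. -/
def minReps (J : Set (Fin (n + 1))) : Set W :=
  {w | ∀ i ∈ J, cs.length w < cs.length (w * cs.simple i)}



section Machinery
open List

local prefix:100 "s" => cs.simple
local prefix:100 "π" => cs.wordProd
local prefix:100 "ℓ" => cs.length

private lemma simple_conj_iff (i : Fin (n + 1)) (t : W) :
    s i * t * s i = s i ↔ t = s i := by
  constructor
  · intro h
    have h2 : s i * (s i * t * s i) * s i = s i * s i * s i := by rw [h]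
    have h3 : s i * (s i * t * s i) * s i = t := by
      simp [mul_assoc, cs.simple_mul_simple_self]
    have h4 : s i * s i * s i = s i := by
      simp [cs.simple_mul_simple_self]
    rw [← h3, h2, h4]
  · rintro rfl
    simp [mul_assoc, cs.simple_mul_simple_self]

open Classical in
/-- The reflection-sign action of a simple generator on `W × ZMod 2`. -/
noncomputable def eact (i : Fin (n + 1)) : Equiv.Perm (W × ZMod 2) :=
  Function.Involutive.toPerm
    (fun p => (s i * p.1 * s i, p.2 + if p.1 = s i then 1 else 0))
    (by
      rintro ⟨t, z⟩
      simp only [Prod.mk.injEq]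
      constructor
      · simp [mul_assoc, cs.simple_mul_simple_self]
      · rw [simple_conj_iff cs i t]
        by_cases h : t = s i <;>
          simp [h, add_assoc, show (1 + 1 : ZMod 2) = 0 by decide])

open Classical in
private lemma eact_apply (i : Fin (n + 1)) (t : W) (z : ZMod 2) :
    eact cs i (t, z) = (s i * t * s i, z + if t = s i then 1 else 0) := rfl


private lemma conj_eq_iff {a t u : W} (ha : a * a = 1) : a * t * a = u ↔ t = a * u * a := by
  have ha' : ∀ x : W, a * (a * x) = x := fun x => by rw [← mul_assoc, ha, one_mul]
  constructor
  · rintro rfl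
    simp [mul_assoc, ha, ha']
  · rintro rfl
    simp [mul_assoc, ha, ha']

private lemma conj_eq_iff' {a t u : W} : a * t * a⁻¹ = u ↔ t = a⁻¹ * u * a := by
  constructor <;> rintro rfl <;> group

private lemma hps (i j : Fin (n + 1)) :
    (s i * s j)⁻¹ * s j = s j * (s i * s j) := by
  rw [mul_inv_rev, cs.inv_simple, cs.inv_simple, mul_assoc]

open Classical in
private lemma eact_pow (i j : Fin (n + 1)) (k : ℕ) (t : W) (z : ZMod 2) :
    ((eact cs i * eact cs j) ^ k) (t, z) =
      ((s i * s j) ^ k * t * ((s i * s j) ^ k)⁻¹,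
        z + ∑ l ∈ Finset.range (2 * k),
          if t = s j * (s i * s j) ^ l then (1 : ZMod 2) else 0) := by
  induction k generalizing t z with
  | zero => simp
  | succ k ih =>
    have happ : ((eact cs i * eact cs j) ^ (k + 1)) (t, z)
        = ((eact cs i * eact cs j) ^ k) ((eact cs i) ((eact cs j) (t, z))) := by
      rw [pow_succ]
      rfl
    have hc : s i * (s j * t * s j) * s i = s i * s j * t * (s i * s j)⁻¹ := by
      rw [mul_inv_rev, cs.inv_simple, cs.inv_simple]
      group
    rw [happ, eact_apply, eact_apply, hc, ih]
    have c3 : ∀ l : ℕ, (s i * s j * t * (s i * s j)⁻¹ = s j * (s i * s j) ^ l)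
        ↔ (t = s j * (s i * s j) ^ (l + 2)) := by
      intro l
      rw [conj_eq_iff']
      have : (s i * s j)⁻¹ * (s j * (s i * s j) ^ l) * (s i * s j)
          = s j * (s i * s j) ^ (l + 2) := by
        have h5 : ((cs.simple i * cs.simple j)⁻¹ * (cs.simple j * (cs.simple i * cs.simple j) ^ l))
            = cs.simple j * (cs.simple i * cs.simple j) ^ (l + 1) := by
          rw [← mul_assoc, hps, mul_assoc, ← pow_succ']
        rw [show (cs.simple i * cs.simple j)⁻¹ * (cs.simple j * (cs.simple i * cs.simple j) ^ l) *
            (cs.simple i * cs.simple j) = ((cs.simple i * cs.simple j)⁻¹ *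
            (cs.simple j * (cs.simple i * cs.simple j) ^ l)) * (cs.simple i * cs.simple j) from rfl,
          h5, mul_assoc, ← pow_succ]
      rw [this]
    simp only [Prod.mk.injEq]
    constructor
    · simp only [pow_succ, mul_inv_rev, mul_assoc]
    · simp only [c3]
      rw [show 2 * (k + 1) = (2 * k + 1) + 1 from by ring]
      rw [Finset.sum_range_succ', Finset.sum_range_succ']
      have e0 : (if t = s j * (s i * s j) ^ 0 then (1 : ZMod 2) else 0)
          = (if t = s j then (1 : ZMod 2) else 0) := by simp
      have e1 : (if t = s j * (s i * s j) ^ (0 + 1) then (1 : ZMod 2) else 0)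
          = (if s j * t * s j = s i then (1 : ZMod 2) else 0) := by
        rw [conj_eq_iff (cs.simple_mul_simple_self j), pow_succ, pow_zero, one_mul, ← mul_assoc]
      have e2 : ∀ l : ℕ, (if t = s j * (s i * s j) ^ (l + 1 + 1) then (1 : ZMod 2) else 0)
          = (if t = s j * (s i * s j) ^ (l + 2) then (1 : ZMod 2) else 0) := by
        intro l
        norm_num
      simp only [e0, e1, e2]
      abel

open Classical in
private lemma eact_liftable : M.IsLiftable (fun i => eact cs i) := by
  intro i j
  ext ⟨t, z⟩ : 2
  · show (((eact cs i * eact cs j) ^ M i j) (t, z)).1 = ((1 : Equiv.Perm (W × ZMod 2)) (t, z)).1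
    rw [eact_pow, cs.simple_mul_simple_pow i j]
    simp
  · show (((eact cs i * eact cs j) ^ M i j) (t, z)).2 = ((1 : Equiv.Perm (W × ZMod 2)) (t, z)).2
    rw [eact_pow]
    have hm : (cs.simple i * cs.simple j) ^ M i j = 1 := cs.simple_mul_simple_pow i j
    have h2 : 2 * M i j = M i j + M i j := by ring
    rw [h2, Finset.sum_range_add]
    have he : ∀ l : ℕ,
        (if t = cs.simple j * (cs.simple i * cs.simple j) ^ (M i j + l) then (1 : ZMod 2) else 0)
        = (if t = cs.simple j * (cs.simple i * cs.simple j) ^ l then (1 : ZMod 2) else 0) := by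
      intro l
      rw [pow_add, hm, one_mul]
    simp only [he]
    show z + (_ + _) = z
    rw [CharTwo.add_self_eq_zero, add_zero]

/-- The sign-counting representation of `W` on `W × ZMod 2`. -/
noncomputable def esign : W →* Equiv.Perm (W × ZMod 2) :=
  cs.lift ⟨fun i => eact cs i, eact_liftable cs⟩

private lemma esign_simple (i : Fin (n + 1)) : esign cs (s i) = eact cs i :=
  cs.lift_apply_simple (eact_liftable cs) i

open Classical in
private lemma esign_wordProd (ω : List (Fin (n + 1))) (t : W) (z : ZMod 2) :
    esign cs (π ω) (t, z) =
      (π ω * t * (π ω)⁻¹,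
        z + ((cs.rightInvSeq ω).countP (fun x => x = t) : ZMod 2)) := by
  induction ω generalizing z with
  | nil => simp
  | cons i ω ih =>
    rw [cs.wordProd_cons, map_mul, Equiv.Perm.mul_apply, ih, esign_simple, eact_apply]
    have hris : cs.rightInvSeq (i :: ω) = ((π ω)⁻¹ * s i * π ω) :: cs.rightInvSeq ω := rfl
    rw [hris, List.countP_cons]
    simp only [Prod.mk.injEq]
    constructor
    · rw [mul_inv_rev, cs.inv_simple]
      group
    · have hcond : (π ω * t * (π ω)⁻¹ = s i) ↔ ((π ω)⁻¹ * s i * π ω = t) := by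
        rw [conj_eq_iff']
        constructor
        · intro h; rw [h]
        · intro h; rw [h]
      push_cast
      by_cases hx : (π ω)⁻¹ * s i * π ω = t
      · rw [if_pos (hcond.mpr hx), if_pos (by simpa using hx)]
        push_cast
        ring
      · rw [if_neg (fun hh => hx (hcond.mp hh)), if_neg (by simpa using hx)]
        push_cast
        ring

open Classical in
lemma exchange (ω : List (Fin (n + 1))) (i : Fin (n + 1))
    (h : ℓ (π ω * s i) < ℓ (π ω)) :
    ∃ j < ω.length, π (ω.eraseIdx j) = π ω * s i := by
  obtain ⟨ω', hred, heq⟩ := cs.exists_reduced_word' (π ω * s i)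
  have hprod : π (ω'.concat i) = π ω := by
    rw [cs.wordProd_concat, ← heq, mul_assoc, cs.simple_mul_simple_self, mul_one]
  have h1 := esign_wordProd cs ω (s i) 0
  have h2 := esign_wordProd cs (ω'.concat i) (s i) 0
  rw [hprod] at h2
  have hpar : ((cs.rightInvSeq ω).countP (fun x => x = s i) : ZMod 2)
      = ((cs.rightInvSeq (ω'.concat i)).countP (fun x => x = s i) : ZMod 2) := by
    have h3 := h1.symm.trans h2
    have h4 := congrArg Prod.snd h3
    simpa using h4
  have hc2 : ((cs.rightInvSeq (ω'.concat i)).countP (fun x => x = s i)) = 1 := by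
    rw [cs.rightInvSeq_concat, List.concat_eq_append, List.countP_append, List.countP_map]
    have hz : List.countP ((fun x => decide (x = s i)) ∘ (MulAut.conj (s i)))
        (cs.rightInvSeq ω') = 0 := by
      rw [List.countP_eq_zero]
      intro t ht
      simp only [Function.comp_apply, decide_eq_true_eq]
      intro hcontra
      have ht' : t = s i := by
        have hcc : s i * t * (s i)⁻¹ = s i := hcontra
        rw [conj_eq_iff'] at hcc
        rw [hcc]
        simp
      rw [ht'] at ht
      have hinv := cs.isRightInversion_of_mem_rightInvSeq hred ht
      have : ℓ (π ω' * s i) < ℓ (π ω') := hinv.2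
      rw [← heq, mul_assoc, cs.simple_mul_simple_self, mul_one] at this
      exact absurd h (by omega)
    rw [hz]
    simp
  rw [hc2] at hpar
  have hpos : (cs.rightInvSeq ω).countP (fun x => x = s i) ≠ 0 := by
    intro h0
    rw [h0] at hpar
    simp at hpar
  have hmem : (s i) ∈ cs.rightInvSeq ω := by
    have := Nat.pos_of_ne_zero hpos
    rw [List.countP_pos_iff] at this
    obtain ⟨a, ha, haa⟩ := this
    simp only [decide_eq_true_eq] at haa
    rwa [haa] at ha
  obtain ⟨j, hj, hji⟩ := List.mem_iff_getElem.mp hmem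
  have hjlen : j < ω.length := by
    rwa [cs.length_rightInvSeq] at hj
  refine ⟨j, hjlen, ?_⟩
  have := cs.wordProd_mul_getD_rightInvSeq ω j
  rw [List.getD_eq_getElem _ _ hj, hji] at this
  exact this.symm


/-! ### ν basics -/

private lemma nu_set_nonempty (w : W) :
    {k | ∃ ω : List (Fin (n + 1)), cs.wordProd ω = w ∧
      (ω.filter (fun i => i ≠ 0)).length = k}.Nonempty := by
  obtain ⟨ω, hω⟩ := cs.wordProd_surjective w
  exact ⟨_, ω, hω, rfl⟩

private lemma nu_le (w : W) (ω : List (Fin (n + 1))) (hw : π ω = w) :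
    nu cs w ≤ (ω.filter (fun i => i ≠ 0)).length :=
  Nat.sInf_le ⟨ω, hw, rfl⟩

private lemma nu_spec (w : W) : ∃ ω : List (Fin (n + 1)),
    π ω = w ∧ (ω.filter (fun i => i ≠ 0)).length = nu cs w :=
  Nat.sInf_mem (nu_set_nonempty cs w)

private lemma nu_mul_zero_le (w : W) : nu cs (w * s 0) ≤ nu cs w := by
  obtain ⟨ω, hp, hf⟩ := nu_spec cs w
  have h1 : π (ω ++ [0]) = w * s 0 := by
    rw [cs.wordProd_append, hp, cs.wordProd_singleton]
  have h2 := nu_le cs (w * s 0) (ω ++ [0]) h1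
  rwa [List.filter_append, show List.filter (fun i => i ≠ 0) [(0 : Fin (n+1))] = [] by simp,
    List.append_nil, hf] at h2

private lemma nu_mul_zero (w : W) : nu cs (w * s 0) = nu cs w := by
  refine le_antisymm (nu_mul_zero_le cs w) ?_
  have := nu_mul_zero_le cs (w * s 0)
  rwa [mul_assoc, cs.simple_mul_simple_self, mul_one] at this

private lemma nu_descent (w : W) (i : Fin (n + 1)) (h : ℓ (w * s i) < ℓ w) :
    nu cs (w * s i) ≤ nu cs w := by
  obtain ⟨ω, hp, hf⟩ := nu_spec cs w
  rw [← hp] at h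
  obtain ⟨j, hj, he⟩ := exchange cs ω i h
  rw [hp] at he
  have h1 := nu_le cs (w * s i) (ω.eraseIdx j) he
  have h2 : ((ω.eraseIdx j).filter (fun i => i ≠ 0)).length ≤
      (ω.filter (fun i => i ≠ 0)).length :=
    ((ω.eraseIdx_sublist j).filter _).length_le
  omega

/-! ### parabolic subgroup words -/

private lemma simple_mem_parabolic {J : Set (Fin (n + 1))} {i : Fin (n + 1)} (hi : i ∈ J) :
    s i ∈ parabolic cs J :=
  Subgroup.subset_closure ⟨i, hi, rfl⟩

private lemma wordProd_mem_parabolic {J : Set (Fin (n + 1))} (ω : List (Fin (n + 1)))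
    (hω : ∀ i ∈ ω, i ∈ J) : π ω ∈ parabolic cs J := by
  induction ω with
  | nil => simp only [cs.wordProd_nil]; exact one_mem _
  | cons a l ih =>
    rw [cs.wordProd_cons]
    exact mul_mem (simple_mem_parabolic cs (hω a List.mem_cons_self))
      (ih fun i hi => hω i (List.mem_cons_of_mem a hi))

private lemma exists_Jword {J : Set (Fin (n + 1))} (u : W) (hu : u ∈ parabolic cs J) :
    ∃ ω : List (Fin (n + 1)), (∀ i ∈ ω, i ∈ J) ∧ π ω = u := by
  induction hu using Subgroup.closure_induction with
  | mem x hx =>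
    obtain ⟨i, hi, rfl⟩ := hx
    exact ⟨[i], by simpa using hi, cs.wordProd_singleton i⟩
  | one => exact ⟨[], by simp, cs.wordProd_nil⟩
  | mul x y hx hy ihx ihy =>
    obtain ⟨ω₁, h₁, hp₁⟩ := ihx
    obtain ⟨ω₂, h₂, hp₂⟩ := ihy
    exact ⟨ω₁ ++ ω₂, fun i hi => (List.mem_append.mp hi).elim (h₁ i) (h₂ i),
      by rw [cs.wordProd_append, hp₁, hp₂]⟩
  | inv x hx ihx =>
    obtain ⟨ω, h₁, hp⟩ := ihx
    exact ⟨ω.reverse, fun i hi => h₁ i (List.mem_reverse.mp hi),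
      by rw [cs.wordProd_reverse, hp]⟩

private lemma reduce_Jword {J : Set (Fin (n + 1))} :
    ∀ N (ω : List (Fin (n + 1))), ω.length ≤ N → (∀ i ∈ ω, i ∈ J) →
    ∃ ω' : List (Fin (n + 1)), (∀ i ∈ ω', i ∈ J) ∧ π ω' = π ω ∧ cs.IsReduced ω' := by
  intro N
  induction N with
  | zero =>
    intro ω hlen _
    have : ω = [] := List.length_eq_zero_iff.mp (Nat.le_zero.mp hlen)
    subst this
    exact ⟨[], by simp, rfl, by simp [CoxeterSystem.IsReduced]⟩
  | succ N IH =>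
    intro ω hlen hJ
    by_cases hred : cs.IsReduced ω
    · exact ⟨ω, hJ, rfl, hred⟩
    · have hne : ω ≠ [] := by
        rintro rfl
        exact hred (by simp [CoxeterSystem.IsReduced])
      set ω₁ := ω.dropLast with hω₁
      set i := ω.getLast hne with hi
      have hsplit : ω₁ ++ [i] = ω := List.dropLast_append_getLast hne
      have hlen₁ : ω₁.length + 1 = ω.length := by
        rw [← hsplit]; simp
      have hωprod : π ω = π ω₁ * s i := by
        rw [← hsplit, cs.wordProd_append, cs.wordProd_singleton]
      have hJ₁ : ∀ k ∈ ω₁, k ∈ J := fun k hk => hJ k (List.dropLast_subset ω hk)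
      by_cases hred1 : cs.IsReduced ω₁
      · have hlt : ℓ (π ω₁ * s i) < ℓ (π ω₁) := by
          rcases cs.length_mul_simple (π ω₁) i with hcase | hcase
          · exfalso
            apply hred
            show ℓ (π ω) = ω.length
            rw [hωprod, hcase, hred1, hlen₁]
          · have hne0 : ℓ (π ω₁ * s i) ≠ ℓ (π ω₁) := cs.length_mul_simple_ne (π ω₁) i
            omega
        obtain ⟨j, hj, he⟩ := exchange cs ω₁ i hlt
        have hJe : ∀ k ∈ ω₁.eraseIdx j, k ∈ J := fun k hk =>
          hJ₁ k (List.mem_of_mem_eraseIdx hk)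
        have hlene : (ω₁.eraseIdx j).length ≤ N := by
          have := List.length_eraseIdx_le ω₁ j
          omega
        obtain ⟨ω', h1, h2, h3⟩ := IH (ω₁.eraseIdx j) hlene hJe
        exact ⟨ω', h1, by rw [h2, he, hωprod], h3⟩
      · have hlen₁' : ω₁.length ≤ N := by omega
        obtain ⟨ω₁', h1, h2, h3⟩ := IH ω₁ hlen₁' hJ₁
        have hlen2 : (ω₁' ++ [i]).length ≤ N := by
          have hlt : ℓ (π ω₁) < ω₁.length := by
            have := cs.length_wordProd_le ω₁
            rcases Nat.lt_or_ge (ℓ (π ω₁)) ω₁.length with h | h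
            · exact h
            · exact absurd (le_antisymm this h) hred1
          have hω₁'len : ω₁'.length = ℓ (π ω₁) := by
            rw [← h2]
            exact h3.symm
          have : (ω₁' ++ [i]).length = ω₁'.length + 1 := by simp
          omega
        have hJ2 : ∀ k ∈ ω₁' ++ [i], k ∈ J := by
          intro k hk
          rcases List.mem_append.mp hk with h | h
          · exact h1 k h
          · simp at h
            subst h
            exact hJ i (List.getLast_mem hne)
        obtain ⟨ω', g1, g2, g3⟩ := IH (ω₁' ++ [i]) hlen2 hJ2
        refine ⟨ω', g1, ?_, g3⟩
        rw [g2, cs.wordProd_append, h2, cs.wordProd_singleton, hωprod]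

private lemma exists_reduced_Jword {J : Set (Fin (n + 1))} (u : W) (hu : u ∈ parabolic cs J) :
    ∃ ω : List (Fin (n + 1)), (∀ i ∈ ω, i ∈ J) ∧ π ω = u ∧ cs.IsReduced ω := by
  obtain ⟨ω, hJ, hp⟩ := exists_Jword cs u hu
  obtain ⟨ω', h1, h2, h3⟩ := reduce_Jword cs ω.length ω le_rfl hJ
  exact ⟨ω', h1, by rw [h2, hp], h3⟩

private lemma parabolic_descent {J : Set (Fin (n + 1))} (u : W) (hu : u ∈ parabolic cs J)
    (hne : u ≠ 1) : ∃ i ∈ J, ℓ (u * s i) < ℓ u ∧ u * s i ∈ parabolic cs J := by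
  obtain ⟨ω, hJ, hp, hred⟩ := exists_reduced_Jword cs u hu
  have hne' : ω ≠ [] := by
    rintro rfl
    exact hne (by rw [← hp, cs.wordProd_nil])
  set i := ω.getLast hne' with hi
  set ω₁ := ω.dropLast with hω₁
  have hsplit : ω₁ ++ [i] = ω := List.dropLast_append_getLast hne'
  have hωp : π ω = π ω₁ * s i := by
    conv_lhs => rw [← hsplit]
    rw [cs.wordProd_append, cs.wordProd_singleton]
  have hprod : u * s i = π ω₁ := by
    rw [← hp, hωp, mul_assoc, cs.simple_mul_simple_self, mul_one]
  refine ⟨i, hJ i (List.getLast_mem hne'), ?_, ?_⟩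
  · have h1 : ℓ (π ω₁) ≤ ω₁.length := cs.length_wordProd_le _
    have h2 : ω₁.length + 1 = ω.length := by rw [← hsplit]; simp
    have h3 : ℓ u = ω.length := by rw [← hp]; exact hred
    rw [hprod]
    omega
  · rw [hprod]
    exact wordProd_mem_parabolic cs _ (fun k hk => hJ k (List.dropLast_subset ω hk))

/-! ### additivity of length over minimal coset representatives -/

private lemma min_add {J : Set (Fin (n + 1))} (x0 : W)
    (hmin : ∀ u ∈ parabolic cs J, ℓ x0 ≤ ℓ (x0 * u)) :
    ∀ u ∈ parabolic cs J, ℓ (x0 * u) = ℓ x0 + ℓ u := by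
  have key : ∀ m : ℕ, ∀ u ∈ parabolic cs J, ℓ u = m → ℓ (x0 * u) = ℓ x0 + ℓ u := by
    intro m
    induction m using Nat.strong_induction_on with
    | _ m IH =>
      intro u hu hm
      by_cases h1 : u = 1
      · simp [h1]
      · obtain ⟨i, hiJ, hdesc, hu'p⟩ := parabolic_descent cs u hu h1
        have hlu' : ℓ (u * s i) < m := hm ▸ hdesc
        have IH' := IH (ℓ (u * s i)) hlu' (u * s i) hu'p rfl
        have hisu : (u * s i) * s i = u := by
          rw [mul_assoc, cs.simple_mul_simple_self, mul_one]
        have hx : x0 * u = (x0 * (u * s i)) * s i := by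
          rw [mul_assoc, mul_assoc, cs.simple_mul_simple_self, mul_one]
        have hlu : ℓ u = ℓ (u * s i) + 1 := by
          rcases cs.length_mul_simple (u * s i) i with hcase | hcase <;>
            rw [hisu] at hcase <;> omega
        rcases cs.length_mul_simple (x0 * (u * s i)) i with hcase | hcase
        · rw [hx, hcase, IH']
          omega
        · exfalso
          obtain ⟨ωx, hredx, hxw⟩ := cs.exists_reduced_word' x0
          obtain ⟨ωu, hJu, hpu, hredu⟩ := exists_reduced_Jword cs (u * s i) hu'p
          have hΩ : π (ωx ++ ωu) = x0 * (u * s i) := by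
            rw [cs.wordProd_append, ← hxw, hpu]
          have hlt : ℓ (π (ωx ++ ωu) * s i) < ℓ (π (ωx ++ ωu)) := by
            rw [hΩ]
            omega
          obtain ⟨j, hj, hje⟩ := exchange cs (ωx ++ ωu) i hlt
          rw [hΩ] at hje
          by_cases hjx : j < ωx.length
          · have hsplit : (ωx ++ ωu).eraseIdx j = ωx.eraseIdx j ++ ωu :=
              List.eraseIdx_append_of_lt_length hjx _
            have heq2 : π (ωx.eraseIdx j) * (u * s i) = x0 * (u * s i) * s i := by
              rw [← hje, hsplit, cs.wordProd_append, hpu]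
            have hz : π (ωx.eraseIdx j) = x0 * ((u * s i) * s i * (u * s i)⁻¹) := by
              have h6 := mul_inv_eq_iff_eq_mul.mpr heq2.symm
              rw [← h6]
              group
            have hvmem : (u * s i) * s i * (u * s i)⁻¹ ∈ parabolic cs J :=
              mul_mem (mul_mem hu'p (simple_mem_parabolic cs hiJ)) (inv_mem hu'p)
            have hge := hmin _ hvmem
            rw [← hz] at hge
            have hle : ℓ (π (ωx.eraseIdx j)) ≤ (ωx.eraseIdx j).length :=
              cs.length_wordProd_le _
            have hlene : (ωx.eraseIdx j).length + 1 = ωx.length :=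
              List.length_eraseIdx_add_one hjx
            have hlx : ℓ x0 = ωx.length := by rw [hxw]; exact hredx
            omega
          · push_neg at hjx
            have hsplit : (ωx ++ ωu).eraseIdx j = ωx ++ ωu.eraseIdx (j - ωx.length) :=
              List.eraseIdx_append_of_length_le hjx _
            have heq2 : x0 * π (ωu.eraseIdx (j - ωx.length)) = x0 * (u * s i) * s i := by
              rw [← hje, hsplit, cs.wordProd_append, ← hxw]
            have hpe : π (ωu.eraseIdx (j - ωx.length)) = u := by
              have h7 : x0 * π (ωu.eraseIdx (j - ωx.length)) = x0 * u := by
                rw [heq2, hx.symm]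
              exact mul_left_cancel h7
            have hjlt : j - ωx.length < ωu.length := by
              rw [List.length_append] at hj
              omega
            have hle : ℓ u ≤ (ωu.eraseIdx (j - ωx.length)).length := by
              rw [← hpe]
              exact cs.length_wordProd_le _
            have hlene : (ωu.eraseIdx (j - ωx.length)).length + 1 = ωu.length :=
              List.length_eraseIdx_add_one hjlt
            have hlu2 : ℓ (u * s i) = ωu.length := by rw [← hpu]; exact hredu
            omega
  exact fun u hu => key (ℓ u) u hu rfl

private lemma minReps_unique {J : Set (Fin (n + 1))} (z₁ z₂ : W) (h₁ : z₁ ∈ minReps cs J)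
    (h₂ : z₂ ∈ minReps cs J) (h : z₁⁻¹ * z₂ ∈ parabolic cs J) : z₁ = z₂ := by
  set S := {m | ∃ u ∈ parabolic cs J, ℓ (z₁ * u) = m} with hSdef
  have hS : S.Nonempty := ⟨ℓ z₁, 1, one_mem _, by rw [mul_one]⟩
  obtain ⟨u0, hu0, hlu0⟩ := Nat.sInf_mem hS
  set x0 := z₁ * u0 with hx0def
  have hmin : ∀ u ∈ parabolic cs J, ℓ x0 ≤ ℓ (x0 * u) := by
    intro u hu
    have hmem : ℓ (x0 * u) ∈ S := ⟨u0 * u, mul_mem hu0 hu, by rw [← mul_assoc]⟩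
    rw [hx0def, hlu0]
    exact Nat.sInf_le hmem
  have hadd := min_add cs x0 hmin
  have main : ∀ z, z ∈ minReps cs J → x0⁻¹ * z ∈ parabolic cs J → z = x0 := by
    intro z hz hzu
    set u := x0⁻¹ * z with hudef
    have hzx : z = x0 * u := by rw [hudef, ← mul_assoc, mul_inv_cancel, one_mul]
    by_contra hne
    have hune : u ≠ 1 := fun h' => hne (by rw [hzx, h', mul_one])
    obtain ⟨i, hiJ, hdesc, humem⟩ := parabolic_descent cs u hzu hune
    have h1 : ℓ (z * s i) = ℓ x0 + ℓ (u * s i) := by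
      rw [hzx, mul_assoc]
      exact hadd _ humem
    have h2 : ℓ z = ℓ x0 + ℓ u := by
      rw [hzx]
      exact hadd u hzu
    have h4 := hz i hiJ
    omega
  have huinv : u0⁻¹ ∈ parabolic cs J := inv_mem hu0
  have e1 : z₁ = x0 := by
    apply main z₁ h₁
    have : x0⁻¹ * z₁ = u0⁻¹ := by rw [hx0def]; group
    rw [this]
    exact huinv
  have e2 : z₂ = x0 := by
    apply main z₂ h₂
    have : x0⁻¹ * z₂ = u0⁻¹ * (z₁⁻¹ * z₂) := by rw [hx0def]; group
    rw [this]
    exact mul_mem huinv h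
  rw [e1, e2]

private lemma exists_desc_of_not_minReps {J : Set (Fin (n + 1))} (w : W)
    (hw : w ∉ minReps cs J) : ∃ i ∈ J, ℓ (w * s i) < ℓ w := by
  unfold minReps at hw
  simp only [Set.mem_setOf_eq, not_forall] at hw
  obtain ⟨i, hi, hnl⟩ := hw
  have := cs.length_mul_simple_ne w i
  exact ⟨i, hi, by omega⟩

private lemma nu_minRep_le {J : Set (Fin (n + 1))} (x : W) (hx : x ∈ minReps cs J) :
    ∀ w : W, x⁻¹ * w ∈ parabolic cs J → nu cs x ≤ nu cs w := by
  have key : ∀ m : ℕ, ∀ w, ℓ w = m → x⁻¹ * w ∈ parabolic cs J → nu cs x ≤ nu cs w := by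
    intro m
    induction m using Nat.strong_induction_on with
    | _ m IH =>
      intro w hm hw
      by_cases hmem : w ∈ minReps cs J
      · rw [minReps_unique cs x w hx hmem hw]
      · obtain ⟨i, hiJ, hdesc⟩ := exists_desc_of_not_minReps cs w hmem
        have h1 : nu cs (w * s i) ≤ nu cs w := nu_descent cs w i hdesc
        have h2 : x⁻¹ * (w * s i) ∈ parabolic cs J := by
          rw [← mul_assoc]
          exact mul_mem hw (simple_mem_parabolic cs hiJ)
        exact le_trans (IH (ℓ (w * s i)) (hm ▸ hdesc) _ rfl h2) h1
  exact fun w hw => key (ℓ w) w rfl hw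


/-! ### `glen` vs `nu` -/

private lemma mem_alt_iff (w : W) : w ∈ alt cs ↔ Even (ℓ w) := Iff.rfl

private lemma Rsym_subset_alt : Rsym cs ⊆ (alt cs : Set W) := by
  rintro g (⟨i, hi, rfl⟩ | hg)
  · rw [SetLike.mem_coe, mem_alt_iff, Nat.even_iff]
    have := cs.length_mul_mod_two (s 0) (s i)
    rw [cs.length_simple, cs.length_simple] at this
    omega
  · obtain ⟨i, hi, hgi⟩ := hg
    have : g = (s 0 * s i)⁻¹ := by rw [← hgi, inv_inv]
    rw [SetLike.mem_coe, this]
    apply inv_mem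
    rw [mem_alt_iff, Nat.even_iff]
    have := cs.length_mul_mod_two (s 0) (s i)
    rw [cs.length_simple, cs.length_simple] at this
    omega

private lemma Rsym_inv {g : W} (hg : g ∈ Rsym cs) : g⁻¹ ∈ Rsym cs := by
  rcases hg with h | h
  · exact Or.inr (by rwa [Set.mem_inv, inv_inv])
  · exact Or.inl (by rwa [Set.mem_inv] at h)

private lemma prod_mem_alt (l : List W) (h : ∀ x ∈ l, x ∈ Rsym cs) : l.prod ∈ alt cs :=
  list_prod_mem (fun x hx => Rsym_subset_alt cs (h x hx))

private lemma glen_le (w : W) (l : List W) (hl : ∀ x ∈ l, x ∈ Rsym cs) (hp : l.prod = w) :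
    glen (Rsym cs) w ≤ l.length :=
  Nat.sInf_le ⟨l, hl, hp, rfl⟩

private lemma glen_spec (w : W) (hw : ∃ l : List W, (∀ x ∈ l, x ∈ Rsym cs) ∧ l.prod = w) :
    ∃ l : List W, (∀ x ∈ l, x ∈ Rsym cs) ∧ l.prod = w ∧ l.length = glen (Rsym cs) w := by
  obtain ⟨l, h1, h2⟩ := hw
  exact Nat.sInf_mem (⟨l.length, l, h1, h2, rfl⟩ :
    {k | ∃ l : List W, (∀ x ∈ l, x ∈ Rsym cs) ∧ l.prod = w ∧ l.length = k}.Nonempty)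

private lemma glen_eq_zero_of_not_alt (w : W) (hw : w ∉ alt cs) : glen (Rsym cs) w = 0 := by
  have he : {k | ∃ l : List W, (∀ x ∈ l, x ∈ Rsym cs) ∧ l.prod = w ∧ l.length = k} = ∅ := by
    rw [Set.eq_empty_iff_forall_notMem]
    rintro k ⟨l, h1, h2, h3⟩
    exact hw (h2 ▸ prod_mem_alt cs l h1)
  rw [glen, he, Nat.sInf_empty]

private lemma glen_mul_le (g w : W) (hg : g ∈ Rsym cs) :
    glen (Rsym cs) (g * w) ≤ glen (Rsym cs) w + 1 := by
  by_cases hw : ∃ l : List W, (∀ x ∈ l, x ∈ Rsym cs) ∧ l.prod = w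
  · obtain ⟨l, h1, h2, h3⟩ := glen_spec cs w hw
    have := glen_le cs (g * w) (g :: l)
      (fun x hx => by
        rcases List.mem_cons.mp hx with h | h
        · exact h ▸ hg
        · exact h1 x h)
      (by rw [List.prod_cons, h2])
    simpa [h3] using this
  · have h0 : glen (Rsym cs) (g * w) = 0 := by
      have he : {k | ∃ l : List W, (∀ x ∈ l, x ∈ Rsym cs) ∧ l.prod = g * w ∧ l.length = k}
          = ∅ := by
        rw [Set.eq_empty_iff_forall_notMem]
        rintro k ⟨l, h1, h2, h3⟩
        refine hw ⟨g⁻¹ :: l, fun x hx => ?_, ?_⟩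
        · rcases List.mem_cons.mp hx with h | h
          · exact h ▸ Rsym_inv cs hg
          · exact h1 x h
        · rw [List.prod_cons, h2, ← mul_assoc, inv_mul_cancel, one_mul]
      rw [glen, he, Nat.sInf_empty]
    omega

private lemma wordProd_length_parity (ω : List (Fin (n + 1))) :
    ℓ (π ω) % 2 = ω.length % 2 := by
  induction ω with
  | nil => simp
  | cons a l ih =>
    rw [cs.wordProd_cons]
    have := cs.length_mul_mod_two (s a) (π l)
    rw [cs.length_simple] at this
    simp only [List.length_cons]
    omega

/-- Generation of words: even-length simple words are products of `Rsym`. -/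
private lemma alt_gen : ∀ N (ω : List (Fin (n + 1))), ω.length ≤ N → Even ω.length →
    ∃ l : List W, (∀ x ∈ l, x ∈ Rsym cs) ∧ l.prod = π ω := by
  intro N
  induction N using Nat.strong_induction_on with
  | _ N IH =>
    intro ω hlen heven
    match ω with
    | [] => exact ⟨[], by simp, by simp⟩
    | [a] => simp at heven
    | a :: b :: rest =>
      have hrl : rest.length + 2 = (a :: b :: rest).length := by simp
      have hreven : Even rest.length := by
        rw [Nat.even_iff] at heven ⊢
        omega
      have hN2 : N ≥ 2 := by omega
      obtain ⟨l', hl', hp'⟩ := IH (N - 2) (by omega) rest (by omega) hreven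
      have hprod : π (a :: b :: rest) = s a * (s b * π rest) := by
        rw [cs.wordProd_cons, cs.wordProd_cons]
      by_cases ha : a = 0
      · by_cases hb : b = 0
        · refine ⟨l', hl', ?_⟩
          rw [hp', hprod, ha, hb, cs.simple_mul_simple_cancel_left]
        · refine ⟨(s 0 * s b) :: l', fun x hx => ?_, ?_⟩
          · rcases List.mem_cons.mp hx with h | h
            · exact h ▸ Or.inl ⟨b, hb, rfl⟩
            · exact hl' x h
          · rw [List.prod_cons, hp', hprod, ha, mul_assoc]
      · by_cases hb : b = 0
        · refine ⟨(s a * s 0) :: l', fun x hx => ?_, ?_⟩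
          · rcases List.mem_cons.mp hx with h | h
            · refine h ▸ Or.inr ?_
              rw [Set.mem_inv, mul_inv_rev, cs.inv_simple, cs.inv_simple]
              exact ⟨a, ha, rfl⟩
            · exact hl' x h
          · rw [List.prod_cons, hp', hprod, hb, mul_assoc]
        · refine ⟨(s a * s 0) :: (s 0 * s b) :: l', fun x hx => ?_, ?_⟩
          · rcases List.mem_cons.mp hx with h | h
            · refine h ▸ Or.inr ?_
              rw [Set.mem_inv, mul_inv_rev, cs.inv_simple, cs.inv_simple]
              exact ⟨a, ha, rfl⟩
            rcases List.mem_cons.mp h with h2 | h2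
            · exact h2 ▸ Or.inl ⟨b, hb, rfl⟩
            · exact hl' x h2
          · rw [List.prod_cons, List.prod_cons, hp', hprod, ← mul_assoc, ← mul_assoc,
              mul_assoc (s a) (s 0) (s 0), cs.simple_mul_simple_self, mul_one, mul_assoc]

private lemma alt_has_word (w : W) (hw : w ∈ alt cs) :
    ∃ l : List W, (∀ x ∈ l, x ∈ Rsym cs) ∧ l.prod = w := by
  obtain ⟨ω, hlen, hprod⟩ := cs.exists_reduced_word w
  have heven : Even ω.length := by
    rw [← show ℓ (π ω) = ω.length from hlen, ← hprod]
    exact hw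
  obtain ⟨l, h1, h2⟩ := alt_gen cs ω.length ω le_rfl heven
  exact ⟨l, h1, by rw [h2, ← hprod]⟩

private lemma Rsym_word_to_simple (l : List W) (hl : ∀ x ∈ l, x ∈ Rsym cs) :
    ∃ ω : List (Fin (n + 1)), π ω = l.prod ∧
      (ω.filter (fun i => i ≠ 0)).length ≤ l.length := by
  induction l with
  | nil => exact ⟨[], by simp, by simp⟩
  | cons g l ih =>
    obtain ⟨ω', h1, h2⟩ := ih (fun x hx => hl x (List.mem_cons_of_mem g hx))
    have hg : g ∈ Rsym cs := hl g List.mem_cons_self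
    rcases hg with ⟨i, hi, hgi⟩ | hginv
    · refine ⟨0 :: i :: ω', ?_, ?_⟩
      · rw [cs.wordProd_cons, cs.wordProd_cons, h1, List.prod_cons, hgi, mul_assoc]
      · have e : (0 :: i :: ω').filter (fun j => j ≠ 0) = i :: ω'.filter (fun j => j ≠ 0) := by
          simp [hi]
        rw [e]
        simp only [List.length_cons]
        omega
    · rw [Set.mem_inv] at hginv
      obtain ⟨i, hi, hgi⟩ := hginv
      have hgeq : g = s i * s 0 := by
        have : g⁻¹⁻¹ = (s 0 * s i)⁻¹ := by rw [hgi]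
        rwa [inv_inv, mul_inv_rev, cs.inv_simple, cs.inv_simple] at this
      refine ⟨i :: 0 :: ω', ?_, ?_⟩
      · rw [cs.wordProd_cons, cs.wordProd_cons, h1, List.prod_cons, hgeq, mul_assoc]
      · have e : (i :: 0 :: ω').filter (fun j => j ≠ 0) = i :: ω'.filter (fun j => j ≠ 0) := by
          simp [hi]
        rw [e]
        simp only [List.length_cons]
        omega

private lemma nu_le_glen (w : W) (hw : w ∈ alt cs) : nu cs w ≤ glen (Rsym cs) w := by
  obtain ⟨l, h1, h2, h3⟩ := glen_spec cs w (alt_has_word cs w hw)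
  obtain ⟨ω, g1, g2⟩ := Rsym_word_to_simple cs l h1
  have := nu_le cs w ω (by rw [g1, h2])
  omega

/-- Cleanup: remove adjacent pairs of `0`s from a word. -/
private def clean : List (Fin (n + 1)) → List (Fin (n + 1))
  | [] => []
  | a :: l =>
    let l' := clean l
    if a = 0 ∧ l'.head? = some 0 then l'.tail else a :: l'

private lemma clean_spec (l : List (Fin (n + 1))) :
    π (clean l) = π l ∧
    ((clean l).filter (fun i => i ≠ 0)).length = (l.filter (fun i => i ≠ 0)).length ∧
    List.Chain' (fun a b => ¬(a = 0 ∧ b = 0)) (clean l) := by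
  induction l with
  | nil => refine ⟨rfl, rfl, ?_⟩; exact List.isChain_nil
  | cons a l ih =>
    obtain ⟨ih1, ih2, ih3⟩ := ih
    have hune : clean (a :: l) = if a = 0 ∧ (clean l).head? = some 0
        then (clean l).tail else a :: clean l := rfl
    by_cases hc : a = 0 ∧ (clean l).head? = some (0 : Fin (n + 1))
    · obtain ⟨ha, hh⟩ := hc
      rw [hune]
      have hcl : clean l = (0 : Fin (n + 1)) :: (clean l).tail := by
        cases hcl' : clean l with
        | nil => rw [hcl'] at hh; simp at hh
        | cons x xs =>
          rw [hcl'] at hh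
          simp only [List.head?_cons, Option.some.injEq] at hh
          rw [hh]
          simp
      rw [if_pos ⟨ha, hh⟩]
      refine ⟨?_, ?_, ?_⟩
      · have h5 : π l = s 0 * π (clean l).tail := by
          rw [← ih1]
          conv_lhs => rw [hcl]
          rw [cs.wordProd_cons]
        rw [cs.wordProd_cons, ha, h5, cs.simple_mul_simple_cancel_left]
      · have h6 : ((clean l).filter (fun i => i ≠ 0)).length
            = (((clean l).tail).filter (fun i => i ≠ 0)).length := by
          conv_lhs => rw [hcl]
          simp
        have h7 : ((a :: l).filter (fun i => i ≠ 0)).length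
            = (l.filter (fun i => i ≠ 0)).length := by
          simp [List.filter_cons, ha]
        omega
      · have := ih3
        rw [hcl] at this
        exact this.tail
    · rw [hune, if_neg hc]
      refine ⟨?_, ?_, ?_⟩
      · rw [cs.wordProd_cons, cs.wordProd_cons, ih1]
      · by_cases ha : a = 0
        · have e1 : (a :: clean l).filter (fun i => i ≠ 0) = (clean l).filter (fun i => i ≠ 0) := by
            simp [ha]
          have e2 : (a :: l).filter (fun i => i ≠ 0) = l.filter (fun i => i ≠ 0) := by
            simp [ha]
          rw [e1, e2]
          exact ih2
        · have e1 : (a :: clean l).filter (fun i => i ≠ 0) = a :: (clean l).filter (fun i => i ≠ 0) := by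
            simp [ha]
          have e2 : (a :: l).filter (fun i => i ≠ 0) = a :: l.filter (fun i => i ≠ 0) := by
            simp [ha]
          rw [e1, e2]
          simp only [List.length_cons]
          omega
      · rw [show List.Chain' _ (a :: clean l) ↔ _ from List.isChain_cons]
        refine ⟨?_, ih3⟩
        intro b hb
        rintro ⟨hb0, hb1⟩
        apply hc
        refine ⟨hb0, ?_⟩
        cases hcl' : clean l with
        | nil => rw [hcl'] at hb; simp at hb
        | cons x xs =>
          rw [hcl'] at hb
          have hxb : x = b := by simpa using hb
          rw [hxb, hb1]
          rfl

private lemma comb : ∀ N (ω : List (Fin (n + 1))), ω.length ≤ N →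
    List.Chain' (fun a b => ¬(a = 0 ∧ b = 0)) ω →
    glen (Rsym cs) (π ω) ≤ (ω.filter (fun i => i ≠ 0)).length := by
  intro N
  induction N using Nat.strong_induction_on with
  | _ N IH =>
    intro ω hlen hch
    match ω with
    | [] =>
      have : glen (Rsym cs) (π ([] : List (Fin (n + 1)))) ≤ 0 :=
        glen_le cs _ [] (by simp) (by simp)
      omega
    | [a] =>
      have hna : π [a] ∉ alt cs := by
        rw [mem_alt_iff, cs.wordProd_singleton, cs.length_simple]
        simp
      rw [glen_eq_zero_of_not_alt cs _ hna]
      omega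
    | a :: b :: rest =>
      have hch1 : ¬(a = 0 ∧ b = 0) := (List.isChain_cons_cons.mp hch).1
      have hchr : List.Chain' (fun a b => ¬(a = 0 ∧ b = 0)) rest :=
        (List.isChain_cons_cons.mp hch).2.tail
      have hN2 : N ≥ 2 := by
        have : (a :: b :: rest).length ≥ 2 := by simp
        omega
      have hrest := IH (N - 2) (by omega) rest (by
        have : (a :: b :: rest).length = rest.length + 2 := by simp
        omega) hchr
      have hprod : π (a :: b :: rest) = s a * (s b * π rest) := by
        rw [cs.wordProd_cons, cs.wordProd_cons]
      by_cases ha : a = 0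
      · have hb : b ≠ 0 := fun hb => hch1 ⟨ha, hb⟩
        have hmul : π (a :: b :: rest) = (s 0 * s b) * π rest := by
          rw [hprod, ha, mul_assoc]
        have h1 : glen (Rsym cs) (π (a :: b :: rest)) ≤ glen (Rsym cs) (π rest) + 1 := by
          rw [hmul]
          exact glen_mul_le cs _ _ (Or.inl ⟨b, hb, rfl⟩)
        have hfil : ((a :: b :: rest).filter (fun i => i ≠ 0)).length
            = (rest.filter (fun i => i ≠ 0)).length + 1 := by
          have e : (a :: b :: rest).filter (fun i => i ≠ 0) = b :: rest.filter (fun i => i ≠ 0) := by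
            simp [ha, hb]
          rw [e]
          simp
        omega
      · by_cases hb : b = 0
        · have hmul : π (a :: b :: rest) = (s a * s 0) * π rest := by
            rw [hprod, hb, mul_assoc]
          have hmem : (s a * s 0 : W) ∈ Rsym cs := by
            refine Or.inr ?_
            rw [Set.mem_inv, mul_inv_rev, cs.inv_simple, cs.inv_simple]
            exact ⟨a, ha, rfl⟩
          have h1 : glen (Rsym cs) (π (a :: b :: rest)) ≤ glen (Rsym cs) (π rest) + 1 := by
            rw [hmul]
            exact glen_mul_le cs _ _ hmem
          have hfil : ((a :: b :: rest).filter (fun i => i ≠ 0)).length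
              = (rest.filter (fun i => i ≠ 0)).length + 1 := by
            have e : (a :: b :: rest).filter (fun i => i ≠ 0)
                = a :: rest.filter (fun i => i ≠ 0) := by
              simp [ha, hb]
            rw [e]
            simp
          omega
        · have hmul : π (a :: b :: rest) = (s a * s 0) * ((s 0 * s b) * π rest) := by
            have hassoc : (s a * s 0) * ((s 0 * s b) * π rest)
                = s a * (s 0 * (s 0 * (s b * π rest))) := by
              simp only [mul_assoc]
            rw [hprod, hassoc, cs.simple_mul_simple_cancel_left]
          have hmem1 : (s a * s 0 : W) ∈ Rsym cs := by
            refine Or.inr ?_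
            rw [Set.mem_inv, mul_inv_rev, cs.inv_simple, cs.inv_simple]
            exact ⟨a, ha, rfl⟩
          have h1 : glen (Rsym cs) (π (a :: b :: rest))
              ≤ glen (Rsym cs) ((s 0 * s b) * π rest) + 1 := by
            rw [hmul]
            exact glen_mul_le cs _ _ hmem1
          have h2 : glen (Rsym cs) ((s 0 * s b) * π rest) ≤ glen (Rsym cs) (π rest) + 1 :=
            glen_mul_le cs _ _ (Or.inl ⟨b, hb, rfl⟩)
          have hfil : ((a :: b :: rest).filter (fun i => i ≠ 0)).length
              = (rest.filter (fun i => i ≠ 0)).length + 2 := by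
            have e : (a :: b :: rest).filter (fun i => i ≠ 0)
                = a :: b :: rest.filter (fun i => i ≠ 0) := by
              simp [ha, hb]
            rw [e]
            simp
          omega

private lemma glen_le_nu (w : W) : glen (Rsym cs) w ≤ nu cs w := by
  obtain ⟨ω, hp, hf⟩ := nu_spec cs w
  obtain ⟨c1, c2, c3⟩ := clean_spec cs ω
  have := comb cs (clean ω).length (clean ω) le_rfl c3
  rw [c1, hp] at this
  omega

private lemma glen_eq_nu (w : W) (hw : w ∈ alt cs) : glen (Rsym cs) w = nu cs w :=
  le_antisymm (glen_le_nu cs w) (nu_le_glen cs w hw)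


end Machinery

/-- For `J ⊆ S` with `s₀ ∈ J`, every element of `τ(W^J)` achieves the minimum
`ℓ_{R ∪ R⁻¹}`-length within its coset of `W⁺/W⁺_{τ(J)}`. -/
theorem statement7 (J : Set (Fin (n + 1))) (h0 : (0 : Fin (n + 1)) ∈ J) :
    ∀ x ∈ minReps cs J, ∀ y ∈ Subgroup.closure (tauSet cs J),
      glen (Rsym cs) (tau cs x) ≤ glen (Rsym cs) (tau cs x * y) := by
  intro x hx y hy
  have htau_par : ∀ g ∈ tauSet cs J, g ∈ parabolic cs J := by
    rintro g ⟨i, hiJ, hi0, rfl⟩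
    exact mul_mem (simple_mem_parabolic cs h0) (simple_mem_parabolic cs hiJ)
  have htau_alt : ∀ g ∈ tauSet cs J, g ∈ alt cs := by
    rintro g ⟨i, hiJ, hi0, rfl⟩
    exact Rsym_subset_alt cs (Or.inl ⟨i, hi0, rfl⟩)
  have hyP : y ∈ parabolic cs J :=
    (Subgroup.closure_le (parabolic cs J)).mpr (fun g hg => htau_par g hg) hy
  have hyA : y ∈ alt cs :=
    (Subgroup.closure_le (alt cs)).mpr (fun g hg => htau_alt g hg) hy
  have htx_alt : tau cs x ∈ alt cs := by
    unfold tau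
    by_cases he : Even (cs.length x)
    · rw [if_pos he]
      exact he
    · rw [if_neg he]
      rw [mem_alt_iff, Nat.even_iff]
      have h1 := cs.length_mul_mod_two x (cs.simple 0)
      rw [cs.length_simple] at h1
      have h2 : cs.length x % 2 = 1 := Nat.not_even_iff.mp he
      omega
  have hmul_alt : tau cs x * y ∈ alt cs := mul_mem htx_alt hyA
  rw [glen_eq_nu cs _ htx_alt, glen_eq_nu cs _ hmul_alt]
  have hnu_tau : nu cs (tau cs x) = nu cs x := by
    unfold tau
    by_cases he : Even (cs.length x)
    · rw [if_pos he]
    · rw [if_neg he]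
      exact nu_mul_zero cs x
  rw [hnu_tau]
  apply nu_minRep_le cs x hx
  unfold tau
  by_cases he : Even (cs.length x)
  · rw [if_pos he]
    have h3 : x⁻¹ * (x * y) = y := by group
    rw [h3]
    exact hyP
  · rw [if_neg he]
    have h3 : x⁻¹ * (x * cs.simple 0 * y) = cs.simple 0 * y := by group
    rw [h3]
    exact mul_mem (simple_mem_parabolic cs h0) hyP

end AltCox
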